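/- Let g : ℝⁿ → ℝᵐ be continuously differentiable with each component gᵢ convex, let Ω = {x ∈ ℝⁿ : gᵢ(x) ≤ 0 for all i ∈ {1,…,m}}, let δ ∈ (0,1), and fix an index î ∈ {1,…,m}. Let {x_k} ⊆ Ω, {d_k}, {s_k} ⊆ ℝⁿ be sequences converging respectively to x̄, d̄, s̄ ∈ ℝⁿ, and for each k define γ_k(t) = x_k + t·d_k + t²·(s_k − d_k). Suppose that for every q ∈ ℕ and every k, g_î(γ_k(δ^q)) > 0. Then: g_î(x̄) = 0, ∇g_î(x̄)ᵀd̄ ≥ 0, and consequently g_î(x̄ + t̃·d̄) ≥ 0 for every t̃ > 0. -/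

import Mathlib

open Filter Topology

/-- if along convergent sequences `x_k → x̄` (with `x_k ∈ Ω`), `d_k → d̄`,
`s_k → s̄` the quadratic curves violate the convex constraint `g_î` at every stepsize `δ^q`,
then `g_î(x̄) = 0`, `∇g_î(x̄)ᵀd̄ ≥ 0`, and consequently `g_î(x̄ + t̃·d̄) ≥ 0` for every
`t̃ > 0`. -/
theorem stmt_14 {n m : ℕ} (g : EuclideanSpace ℝ (Fin n) → Fin m → ℝ)
    (hg_smooth : ∀ i, ContDiff ℝ 1 (fun y => g y i))
    (hg_conv : ∀ i, ConvexOn ℝ Set.univ (fun y => g y i))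
    (δ : ℝ) (hδ : δ ∈ Set.Ioo (0 : ℝ) 1)
    (ihat : Fin m)
    (x d s : ℕ → EuclideanSpace ℝ (Fin n))
    (hxΩ : ∀ k, ∀ i, g (x k) i ≤ 0)
    (xbar dbar sbar : EuclideanSpace ℝ (Fin n))
    (hx : Filter.Tendsto x Filter.atTop (nhds xbar))
    (hd : Filter.Tendsto d Filter.atTop (nhds dbar))
    (hs : Filter.Tendsto s Filter.atTop (nhds sbar))
    (hviol : ∀ q k : ℕ,
      0 < g (x k + (δ ^ q) • d k + (δ ^ q) ^ 2 • (s k - d k)) ihat) :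
    g xbar ihat = 0 ∧
    0 ≤ fderiv ℝ (fun y => g y ihat) xbar dbar ∧
    ∀ ttil : ℝ, 0 < ttil → 0 ≤ g (xbar + ttil • dbar) ihat := by
  obtain ⟨hδ0, hδ1⟩ := hδ
  set G : EuclideanSpace ℝ (Fin n) → ℝ := fun y => g y ihat with hG
  have hGc : Continuous G := (hg_smooth ihat).continuous
  have hGd : Differentiable ℝ G := (hg_smooth ihat).differentiable one_ne_zero
  have hδq : Tendsto (fun q : ℕ => δ ^ q) atTop (𝓝 0) :=
    tendsto_pow_atTop_nhds_zero_of_lt_one hδ0.le hδ1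
  -- Step 1: g(x k) = 0 for all k
  have hxk0 : ∀ k, G (x k) = 0 := by
    intro k
    refine le_antisymm (hxΩ k ihat) ?_
    have hlim : Tendsto (fun q : ℕ => x k + (δ ^ q) • d k + (δ ^ q) ^ 2 • (s k - d k))
        atTop (𝓝 (x k)) := by
      have : Tendsto (fun q : ℕ => x k + (δ ^ q) • d k + (δ ^ q) ^ 2 • (s k - d k))
          atTop (𝓝 (x k + (0:ℝ) • d k + ((0:ℝ)) ^ 2 • (s k - d k))) := by
        exact ((tendsto_const_nhds.add (hδq.smul_const (d k))).add
          ((hδq.pow 2).smul_const (s k - d k)))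
      simpa using this
    exact ge_of_tendsto' (hGc.continuousAt.tendsto.comp hlim)
      (fun q => (hviol q k).le)
  have hgxbar : G xbar = 0 := by
    have h1 : Tendsto (fun k => G (x k)) atTop (𝓝 (G xbar)) :=
      (hGc.continuousAt.tendsto.comp hx)
    have h2 : Tendsto (fun k => G (x k)) atTop (𝓝 0) := by
      simp only [hxk0]; exact (tendsto_const_nhds : Tendsto (fun _ : ℕ => (0:ℝ)) atTop (𝓝 0))
    exact tendsto_nhds_unique h1 h2
  -- Step 2: limit curve is nonnegative at each δ^q
  have hcurve : ∀ q : ℕ, 0 ≤ G (xbar + (δ ^ q) • dbar + (δ ^ q) ^ 2 • (sbar - dbar)) := by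
    intro q
    have hlim : Tendsto (fun k => x k + (δ ^ q) • d k + (δ ^ q) ^ 2 • (s k - d k))
        atTop (𝓝 (xbar + (δ ^ q) • dbar + (δ ^ q) ^ 2 • (sbar - dbar))) :=
      (hx.add ((hd.const_smul _))).add (((hs.sub hd).const_smul _))
    exact ge_of_tendsto' (hGc.continuousAt.tendsto.comp hlim)
      (fun k => (hviol q k).le)
  set L : ℝ := fderiv ℝ G xbar dbar with hL
  -- derivative of the quadratic curve composition
  have hψ : HasDerivAt (fun t : ℝ => G (xbar + t • dbar + t ^ 2 • (sbar - dbar))) L 0 := by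
    have hc : HasDerivAt (fun t : ℝ => xbar + t • dbar + t ^ 2 • (sbar - dbar))
        (dbar + (2 * 0 ^ 1 : ℝ) • (sbar - dbar)) 0 := by
      have h1 : HasDerivAt (fun t : ℝ => t • dbar) ((1:ℝ) • dbar) 0 :=
        (hasDerivAt_id 0).smul_const dbar
      have h2 : HasDerivAt (fun t : ℝ => t ^ 2 • (sbar - dbar))
          ((2 * 0 ^ 1 : ℝ) • (sbar - dbar)) 0 :=
        (hasDerivAt_pow 2 0).smul_const (sbar - dbar)
      exact (((hasDerivAt_const 0 xbar).add h1).add h2).congr_deriv (by simp)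
    have hc' : HasDerivAt (fun t : ℝ => xbar + t • dbar + t ^ 2 • (sbar - dbar)) dbar 0 := by
      simpa using hc
    have hF : HasFDerivAt G (fderiv ℝ G xbar)
        ((fun t : ℝ => xbar + t • dbar + t ^ 2 • (sbar - dbar)) 0) := by
      simpa using (hGd xbar).hasFDerivAt
    exact hF.comp_hasDerivAt 0 hc'
  have hLnonneg : 0 ≤ L := by
    have hslope : Tendsto (slope (fun t : ℝ => G (xbar + t • dbar + t ^ 2 • (sbar - dbar))) 0)
        (𝓝[≠] 0) (𝓝 L) := hasDerivAt_iff_tendsto_slope.mp hψ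
    have hseq : Tendsto (fun q : ℕ => δ ^ q) atTop (𝓝[≠] 0) := by
      refine tendsto_nhdsWithin_of_tendsto_nhds_of_eventually_within _ hδq ?_
      exact Eventually.of_forall fun q => (pow_pos hδ0 q).ne'
    refine ge_of_tendsto' (hslope.comp hseq) fun q => ?_
    have hpos : (0:ℝ) < δ ^ q := pow_pos hδ0 q
    have : slope (fun t : ℝ => G (xbar + t • dbar + t ^ 2 • (sbar - dbar))) 0 (δ ^ q)
        = G (xbar + (δ ^ q) • dbar + (δ ^ q) ^ 2 • (sbar - dbar)) / δ ^ q := by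
      rw [slope_def_field]
      simp [div_eq_inv_mul, hgxbar]
    rw [Function.comp_apply, this]
    exact div_nonneg (hcurve q) hpos.le
  refine ⟨hgxbar, hLnonneg, ?_⟩
  -- Step 3: convexity along the line
  intro ttil httil
  have hφconv : ConvexOn ℝ Set.univ (fun t : ℝ => G (xbar + t • dbar)) := by
    have := (hg_conv ihat).comp_affineMap (AffineMap.lineMap xbar (xbar + dbar))
    have heq : (fun t : ℝ => G (xbar + t • dbar))
        = (fun y => g y ihat) ∘ (AffineMap.lineMap xbar (xbar + dbar)) := by
      funext t
      simp [AffineMap.lineMap_apply, hG, add_comm]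
    rw [heq]
    simpa using this
  have hφderiv : HasDerivAt (fun t : ℝ => G (xbar + t • dbar)) L 0 := by
    have hc : HasDerivAt (fun t : ℝ => xbar + t • dbar) dbar 0 := by
      exact ((hasDerivAt_const (0:ℝ) xbar).add ((hasDerivAt_id (0:ℝ)).smul_const dbar)).congr_deriv (by simp)
    have hF : HasFDerivAt G (fderiv ℝ G xbar) ((fun t : ℝ => xbar + t • dbar) 0) := by
      simpa using (hGd xbar).hasFDerivAt
    exact hF.comp_hasDerivAt 0 hc
  have hslope := hφconv.le_slope_of_hasDerivAt (Set.mem_univ 0) (Set.mem_univ ttil)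
    httil hφderiv
  rw [slope_def_field] at hslope
  have h0 : G (xbar + (0:ℝ) • dbar) = 0 := by simpa using hgxbar
  have : 0 ≤ (G (xbar + ttil • dbar)) / ttil := by
    have := hslope
    rw [h0] at this
    calc (0:ℝ) ≤ L := hLnonneg
      _ ≤ _ := by simpa using this
  have := (div_nonneg_iff.mp this)
  rcases this with ⟨h, _⟩ | ⟨_, h⟩
  · exact h
  · linarith
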